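/- Let R be a reduced commutative ring and M a torsionfree commutative monoid. Then the monoid algebra R[M] is reduced. -/

import Mathlib

namespace MAredAux

/-! ## A diagonal unique-sum lemma in torsion-free abelian groups -/

theorem diag_group {G : Type*} [AddCommGroup G] [NoZeroSMulDivisors ℤ G]
    (F : Finset G) (hne : F.Nonempty) :
    ∃ g ∈ F, ∀ u ∈ F, ∀ v ∈ F, u + v = g + g → u = g ∧ v = g := by
  classical
  set H : Submodule ℤ G := Submodule.span ℤ (F : Set G) with hH
  haveI : Module.Finite ℤ H := Module.Finite.span_of_finite ℤ F.finite_toSet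
  haveI : Module.Free ℤ H := Module.free_of_finite_type_torsion_free'
  set ι := Module.Free.ChooseBasisIndex ℤ H
  let bas : Module.Basis ι ℤ H := Module.Free.chooseBasis ℤ H
  haveI : UniqueSums H := by
    refine UniqueSums.of_injective_addHom
      ⟨fun x => bas.repr x, fun x y => map_add _ _ _⟩ ?_ inferInstance
    intro x y h
    exact bas.repr.injective h
  let FH : Finset H := F.attach.image fun x => (⟨x.1, Submodule.subset_span x.2⟩ : H)
  have hFHne : FH.Nonempty := Finset.Nonempty.image (Finset.attach_nonempty_iff.mpr hne) _
  obtain ⟨u, hu, v, hv, huniq⟩ := UniqueSums.uniqueAdd_of_nonempty hFHne hFHne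
  have hvu : u = v := ((huniq hv hu (add_comm v u)).2)
  subst hvu
  have huF : (u : G) ∈ F := by
    obtain ⟨x, -, rfl⟩ := Finset.mem_image.mp hu
    exact x.2
  refine ⟨u, huF, ?_⟩
  intro a ha b hb hab
  have haH : (⟨a, Submodule.subset_span ha⟩ : H) ∈ FH :=
    Finset.mem_image.mpr ⟨⟨a, ha⟩, Finset.mem_attach _ _, rfl⟩
  have hbH : (⟨b, Submodule.subset_span hb⟩ : H) ∈ FH :=
    Finset.mem_image.mpr ⟨⟨b, hb⟩, Finset.mem_attach _ _, rfl⟩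
  have hsum : (⟨a, Submodule.subset_span ha⟩ : H) + ⟨b, Submodule.subset_span hb⟩ = u + u :=
    Subtype.ext (by simpa using hab)
  obtain ⟨h1, h2⟩ := huniq haH hbH hsum
  exact ⟨congrArg Subtype.val h1, congrArg Subtype.val h2⟩

/-! ## The archimedean preorder on a commutative monoid -/

variable {M : Type*} [AddCommMonoid M]

/-- `x` divides some positive multiple of `y`. -/
def Dv (x y : M) : Prop := ∃ (n : ℕ) (u : M), 0 < n ∧ x + u = n • y

theorem dv_refl (x : M) : Dv x x := ⟨2, x, by omega, (two_nsmul x).symm⟩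

theorem dv_trans {x y z : M} (h1 : Dv x y) (h2 : Dv y z) : Dv x z := by
  obtain ⟨n, u, hn, hu⟩ := h1
  obtain ⟨m, v, hm, hv⟩ := h2
  refine ⟨n * m, u + n • v, Nat.mul_pos hn hm, ?_⟩
  rw [← add_assoc, hu, ← smul_add, hv, smul_smul]

theorem dv_add_right (x y : M) : Dv x (x + y) := ⟨1, y, Nat.one_pos, (one_smul ℕ _).symm⟩

theorem dv_join {x y z : M} (h1 : Dv x z) (h2 : Dv y z) : Dv (x + y) z := by
  obtain ⟨n, u, hn, hu⟩ := h1
  obtain ⟨m, v, hm, hv⟩ := h2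
  refine ⟨n + m, u + v, by omega, ?_⟩
  rw [add_smul, ← hu, ← hv]
  rw [add_add_add_comm]

theorem dv_cancel (htf : ∀ (r : ℕ) (m n : M), r ≠ 0 → r • m = r • n → m = n)
    {x y z : M} (hzx : Dv z x) (hzy : Dv z y) (h : x + z = y + z) : x = y := by
  obtain ⟨n, u, hn, hu⟩ := hzx
  obtain ⟨m, v, hm, hv⟩ := hzy
  -- x + n•x = y + n•x
  have e1 : y + n • x = x + n • x := by
    have := congrArg (· + u) h
    simp only [add_assoc, hu] at this
    exact this.symm
  have key1 : ∀ k : ℕ, 0 < k → k • y + n • x = (n + k) • x := by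
    intro k hk
    induction k with
    | zero => omega
    | succ k ih =>
      rcases Nat.eq_zero_or_pos k with rfl | hk'
      · simp only [Nat.zero_add, one_smul]
        rw [e1, succ_nsmul]
        exact add_comm x (n • x)
      · have h5 : (k + 1) • y + n • x = y + (k • y + n • x) := by
          rw [succ_nsmul' y k, add_assoc]
        rw [h5, ih hk', add_smul, ← add_assoc, e1, ← succ_nsmul' x n, ← add_smul]
        congr 1
        omega
  have e2 : x + m • y = y + m • y := by
    have := congrArg (· + v) h.symm
    simp only [add_assoc, hv] at this
    exact this.symm
  have key2 : ∀ k : ℕ, 0 < k → k • x + m • y = (m + k) • y := by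
    intro k hk
    induction k with
    | zero => omega
    | succ k ih =>
      rcases Nat.eq_zero_or_pos k with rfl | hk'
      · simp only [Nat.zero_add, one_smul]
        rw [e2, succ_nsmul]
        exact add_comm y (m • y)
      · have h5 : (k + 1) • x + m • y = x + (k • x + m • y) := by
          rw [succ_nsmul' x k, add_assoc]
        rw [h5, ih hk', add_smul, ← add_assoc, e2, ← succ_nsmul' y m, ← add_smul]
        congr 1
        omega
  have hx := key1 m hm   -- m•y + n•x = (n+m)•x
  have hy := key2 n hn   -- n•x + m•y = (m+n)•y
  rw [add_comm (n • x) (m • y)] at hy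
  have : (n + m) • x = (n + m) • y := by
    rw [← hx, hy, Nat.add_comm m n]
  exact htf (n + m) x y (by omega) this

theorem exists_min (T : Finset M) (hne : T.Nonempty) :
    ∃ m ∈ T, ∀ s ∈ T, Dv s m → Dv m s := by
  classical
  induction T using Finset.cons_induction with
  | empty => exact absurd hne (by simp)
  | cons x S hx ih =>
    rcases S.eq_empty_or_nonempty with rfl | hS
    · refine ⟨x, Finset.mem_cons_self _ _, ?_⟩
      intro s hs _
      rcases Finset.mem_cons.mp hs with rfl | h
      · exact dv_refl _
      · simp at h
    · obtain ⟨m₀, hm₀, hmin⟩ := ih hS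
      by_cases hc : Dv x m₀ ∧ ¬ Dv m₀ x
      · refine ⟨x, Finset.mem_cons_self _ _, ?_⟩
        intro s hs hsx
        rcases Finset.mem_cons.mp hs with rfl | h
        · exact dv_refl _
        · exact dv_trans hc.1 (hmin s h (dv_trans hsx hc.1))
      · refine ⟨m₀, Finset.mem_cons_of_mem hm₀, ?_⟩
        intro s hs hsm
        rcases Finset.mem_cons.mp hs with rfl | h
        · by_cases h2 : Dv s m₀
          · rcases not_and_or.mp hc with h3 | h3
            · exact absurd h2 h3
            · exact not_not.mp h3
          · exact absurd hsm h2
        · exact hmin s h hsm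

/-! ## The class of `m₀`, as a package -/

class PClass (M : Type*) [AddCommMonoid M] (P : M → Prop) : Prop where
  padd : ∀ {x y : M}, P x → P y → P (x + y)
  pcancel : ∀ {x y z : M}, P x → P y → P z → x + z = y + z → x = y
  ptf : ∀ (r : ℕ) {x y : M}, r ≠ 0 → r • x = r • y → x = y
  pnonempty : ∃ m, P m

variable (P : M → Prop)

def CS := {x : M // P x}

variable [PClass M P]

instance : Add (CS P) := ⟨fun x y => ⟨x.1 + y.1, PClass.padd x.2 y.2⟩⟩

theorem cs_add_val (x y : CS P) : (x + y).1 = x.1 + y.1 := rfl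

/-- The basepoint. -/
noncomputable def cP : CS P := ⟨Classical.choose (PClass.pnonempty (P := P)),
  Classical.choose_spec (PClass.pnonempty (P := P))⟩

def sdrel (p q : CS P × CS P) : Prop := p.1.1 + q.2.1 = q.1.1 + p.2.1

theorem sdrel_equiv : Equivalence (sdrel P) := by
  constructor
  · intro p; rfl
  · intro p q h
    exact h.symm
  · intro p q r h1 h2
    unfold sdrel at *
    have key : (p.1.1 + r.2.1) + (q.1.1 + q.2.1) = (r.1.1 + p.2.1) + (q.1.1 + q.2.1) := by
      calc (p.1.1 + r.2.1) + (q.1.1 + q.2.1)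
          = (p.1.1 + q.2.1) + (q.1.1 + r.2.1) := by abel
        _ = (q.1.1 + p.2.1) + (r.1.1 + q.2.1) := by rw [h1, h2]
        _ = (r.1.1 + p.2.1) + (q.1.1 + q.2.1) := by abel
    exact PClass.pcancel (P := P)
      (PClass.padd p.1.2 r.2.2) (PClass.padd r.1.2 p.2.2)
      (PClass.padd q.1.2 q.2.2) key

def sd : Setoid (CS P × CS P) := ⟨sdrel P, sdrel_equiv P⟩

abbrev GG := Quotient (sd P)

noncomputable instance : Zero (GG P) := ⟨Quotient.mk (sd P) (cP P, cP P)⟩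

instance : Add (GG P) :=
  ⟨Quotient.map₂ (fun p q => (p.1 + q.1, p.2 + q.2)) (by
    rintro ⟨a1, a2⟩ ⟨b1, b2⟩ hab ⟨c1, c2⟩ ⟨d1, d2⟩ hcd
    show sdrel P _ _
    unfold sdrel at *
    show (a1.1 + c1.1) + (b2.1 + d2.1) = (b1.1 + d1.1) + (a2.1 + c2.1)
    calc (a1.1 + c1.1) + (b2.1 + d2.1) = (a1.1 + b2.1) + (c1.1 + d2.1) := by abel
      _ = (b1.1 + a2.1) + (d1.1 + c2.1) := by rw [hab, hcd]
      _ = (b1.1 + d1.1) + (a2.1 + c2.1) := by abel)⟩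

instance : Neg (GG P) :=
  ⟨Quotient.map (fun p => (p.2, p.1)) (by
    rintro ⟨a1, a2⟩ ⟨b1, b2⟩ hab
    have hab' : a1.1 + b2.1 = b1.1 + a2.1 := hab
    show a2.1 + b1.1 = b2.1 + a1.1
    rw [add_comm a2.1, add_comm b2.1]
    exact hab'.symm)⟩

noncomputable instance : AddCommGroup (GG P) where
  add := (· + ·)
  zero := 0
  neg := (- ·)
  nsmul := nsmulRec
  zsmul := zsmulRec
  add_assoc := by
    rintro ⟨a⟩ ⟨b⟩ ⟨c⟩
    apply Quotient.sound
    show sdrel P _ _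
    show ((a.1.1 + b.1.1) + c.1.1) + (a.2.1 + (b.2.1 + c.2.1))
        = (a.1.1 + (b.1.1 + c.1.1)) + ((a.2.1 + b.2.1) + c.2.1)
    abel
  add_comm := by
    rintro ⟨a⟩ ⟨b⟩
    apply Quotient.sound
    show sdrel P _ _
    show (a.1.1 + b.1.1) + (b.2.1 + a.2.1) = (b.1.1 + a.1.1) + (a.2.1 + b.2.1)
    abel
  zero_add := by
    rintro ⟨a⟩
    apply Quotient.sound
    show sdrel P _ _
    show ((cP P).1 + a.1.1) + a.2.1 = a.1.1 + ((cP P).1 + a.2.1)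
    abel
  add_zero := by
    rintro ⟨a⟩
    apply Quotient.sound
    show sdrel P _ _
    show (a.1.1 + (cP P).1) + a.2.1 = a.1.1 + (a.2.1 + (cP P).1)
    abel
  neg_add_cancel := by
    rintro ⟨a⟩
    apply Quotient.sound
    show sdrel P _ _
    show (a.2.1 + a.1.1) + (cP P).1 = (cP P).1 + (a.1.1 + a.2.1)
    abel

theorem gg_add_mk (p q : CS P × CS P) :
    (Quotient.mk (sd P) p + Quotient.mk (sd P) q : GG P)
      = Quotient.mk (sd P) (p.1 + q.1, p.2 + q.2) := rfl

theorem gg_zero_def : (0 : GG P) = Quotient.mk (sd P) (cP P, cP P) := rfl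

theorem gg_mk_diag (x : CS P) : (Quotient.mk (sd P) (x, x) : GG P) = 0 := by
  rw [gg_zero_def]
  exact Quotient.sound (add_comm x.1 (cP P).1)

/-- `(n+1)`-fold sum in `CS P`. -/
def smulS : ℕ → CS P → CS P
  | 0, x => x
  | n + 1, x => x + smulS n x

theorem smulS_val (n : ℕ) (x : CS P) : (smulS P n x).1 = (n + 1) • x.1 := by
  induction n with
  | zero => simp [smulS]
  | succ n ih =>
    show (x + smulS P n x).1 = _
    rw [cs_add_val, ih, succ_nsmul' x.1 (n + 1)]

theorem gg_nsmul_mk (n : ℕ) (p : CS P × CS P) :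
    (n + 1) • (Quotient.mk (sd P) p : GG P)
      = Quotient.mk (sd P) (smulS P n p.1, smulS P n p.2) := by
  induction n with
  | zero => simp [smulS]
  | succ n ih =>
    rw [succ_nsmul' (Quotient.mk (sd P) p : GG P) (n + 1), ih, gg_add_mk]
    rfl

instance : NoZeroSMulDivisors ℤ (GG P) := by
  constructor
  intro n g h
  by_cases hn : n = 0
  · exact Or.inl hn
  right
  have key : ∀ (k : ℕ) (g : GG P), (k + 1) • g = 0 → g = 0 := by
    intro k g hk
    obtain ⟨p, rfl⟩ := Quotient.exists_rep g
    obtain ⟨p1, p2⟩ := p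
    rw [gg_nsmul_mk] at hk
    have hrel : sdrel P (smulS P k p1, smulS P k p2) (cP P, cP P) := Quotient.exact hk
    unfold sdrel at hrel
    have h1 : (smulS P k p1).1 + (cP P).1 = (smulS P k p2).1 + (cP P).1 := by
      rw [hrel, add_comm]
    have h2 : (smulS P k p1).1 = (smulS P k p2).1 :=
      PClass.pcancel (P := P) (smulS P k p1).2 (smulS P k p2).2 (cP P).2 h1
    rw [smulS_val, smulS_val] at h2
    have h3 : p1.1 = p2.1 := PClass.ptf (P := P) (k + 1) (by omega) h2
    have h4 : p1 = p2 := Subtype.ext h3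
    rw [h4]
    exact gg_mk_diag P p2
  rcases n with k | k
  · rcases k with _ | k
    · exact absurd rfl hn
    · apply key k g
      have : ((k + 1 : ℕ) : ℤ) • g = 0 := by exact_mod_cast h
      rwa [natCast_zsmul] at this
  · apply key k g
    rw [negSucc_zsmul] at h
    rw [← neg_eq_zero]
    simpa using h

/-- The map from the class into its Grothendieck group. -/
noncomputable def phi (x : CS P) : GG P := Quotient.mk (sd P) (x, cP P)

theorem phi_inj {x y : CS P} (h : phi P x = phi P y) : x = y := by
  have hrel : sdrel P (x, cP P) (y, cP P) := Quotient.exact h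
  unfold sdrel at hrel
  have : x.1 + (cP P).1 = y.1 + (cP P).1 := by
    rw [hrel, add_comm]
  exact Subtype.ext (PClass.pcancel (P := P) x.2 y.2 (cP P).2 this)

theorem phi_add (x y : CS P) : phi P x + phi P y
    = Quotient.mk (sd P) (x + y, cP P + cP P) := rfl

theorem diag_P (T : Finset M) (hT : ∀ x ∈ T, P x) (hne : T.Nonempty) :
    ∃ m ∈ T, ∀ u ∈ T, ∀ v ∈ T, u + v = m + m → u = m ∧ v = m := by
  classical
  let f : {x // x ∈ T} → GG P := fun x => phi P ⟨x.1, hT x.1 x.2⟩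
  let F : Finset (GG P) := T.attach.image f
  have hFne : F.Nonempty := Finset.Nonempty.image (Finset.attach_nonempty_iff.mpr hne) _
  obtain ⟨g, hgF, hguniq⟩ := diag_group F hFne
  obtain ⟨x, -, rfl⟩ := Finset.mem_image.mp hgF
  refine ⟨x.1, x.2, ?_⟩
  intro u hu v hv huv
  have hmemu : f ⟨u, hu⟩ ∈ F := Finset.mem_image.mpr ⟨⟨u, hu⟩, Finset.mem_attach _ _, rfl⟩
  have hmemv : f ⟨v, hv⟩ ∈ F := Finset.mem_image.mpr ⟨⟨v, hv⟩, Finset.mem_attach _ _, rfl⟩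
  have hsum : f ⟨u, hu⟩ + f ⟨v, hv⟩ = f x + f x := by
    show phi P _ + phi P _ = phi P _ + phi P _
    refine (phi_add P _ _).trans (Eq.trans ?_ (phi_add P _ _).symm)
    apply congrArg
    refine Prod.ext (Subtype.ext ?_) rfl
    exact huv
  obtain ⟨h1, h2⟩ := hguniq _ hmemu _ hmemv hsum
  constructor
  · exact congrArg Subtype.val (phi_inj P h1)
  · exact congrArg Subtype.val (phi_inj P h2)

end MAredAux

open MAredAux

/-- Let `R` be a reduced commutative ring and `M` a torsionfree commutative monoid.
Then the monoid algebra `R[M]` is reduced. -/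
theorem monoidAlgebra_isReduced (R : Type*) [CommRing R] [IsReduced R]
    (M : Type*) [AddCommMonoid M]
    (htf : ∀ (r : ℕ) (m n : M), r ≠ 0 → r • m = r • n → m = n) :
    IsReduced (AddMonoidAlgebra R M) := by
  classical
  have key : ∀ a : AddMonoidAlgebra R M, a * a = 0 → a = 0 := by
    intro a ha
    by_contra hne
    have hTne : a.coeff.support.Nonempty := Finsupp.support_nonempty_iff.mpr (by rwa [Ne, AddMonoidAlgebra.coeff_eq_zero])
    obtain ⟨m₀, hm₀T, hmin⟩ := exists_min a.coeff.support hTne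
    set P : M → Prop := fun x => Dv x m₀ ∧ Dv m₀ x with hPdef
    haveI : PClass M P := by
      constructor
      · intro x y hx hy
        exact ⟨dv_join hx.1 hy.1, dv_trans hx.2 (dv_add_right x y)⟩
      · intro x y z hx hy hz h
        exact dv_cancel htf (dv_trans hz.1 hx.2) (dv_trans hz.1 hy.2) h
      · intro r x y hr h
        exact htf r x y hr h
      · exact ⟨m₀, dv_refl m₀, dv_refl m₀⟩
    set b : AddMonoidAlgebra R M := AddMonoidAlgebra.ofCoeff (Finsupp.filter P a.coeff) with hbdef
    set c : AddMonoidAlgebra R M := AddMonoidAlgebra.ofCoeff (Finsupp.filter (fun x => ¬ P x) a.coeff) with hcdef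
    have hbc : b + c = a := congrArg AddMonoidAlgebra.ofCoeff (Finsupp.filter_pos_add_filter_neg a.coeff P)
    have hbsupp : ∀ x ∈ b.coeff.support, x ∈ a.coeff.support ∧ P x := by
      intro x hx
      rw [hbdef, AddMonoidAlgebra.coeff_ofCoeff, Finsupp.support_filter, Finset.mem_filter] at hx
      exact hx
    have hcsupp : ∀ x ∈ c.coeff.support, x ∈ a.coeff.support ∧ ¬ P x := by
      intro x hx
      rw [hcdef, AddMonoidAlgebra.coeff_ofCoeff, Finsupp.support_filter, Finset.mem_filter] at hx
      exact hx
    -- products with `c` vanish on coefficients in the class of `m₀`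
    have haux : ∀ f : AddMonoidAlgebra R M, ∀ x, P x → (f * c).coeff x = 0 := by
      intro f x hx
      rw [AddMonoidAlgebra.coeff_mul]
      apply Finset.sum_eq_zero
      intro u hu
      apply Finset.sum_eq_zero
      intro v hv
      have hvc := hcsupp v hv
      by_cases h : u + v = x
      · exfalso
        have hvx : Dv v x := by
          rw [← h, add_comm u v]
          exact dv_add_right v u
        have hvm : Dv v m₀ := dv_trans hvx hx.1
        exact hvc.2 ⟨hvm, hmin v hvc.1 hvm⟩
      · simp [h]
    have hbb : ∀ x, P x → (b * b).coeff x = 0 := by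
      intro x hx
      have hsplit : a * a = b * b + (b * c + (c * b + c * c)) := by
        rw [← hbc]; ring
      have hx0 : (b * b).coeff x + ((b * c).coeff x + ((c * b).coeff x + (c * c).coeff x)) = 0 := by
        rw [← Finsupp.add_apply, ← AddMonoidAlgebra.coeff_add, ← Finsupp.add_apply, ← AddMonoidAlgebra.coeff_add, ← Finsupp.add_apply, ← AddMonoidAlgebra.coeff_add, ← hsplit, ha]
        rfl
      rw [mul_comm c b] at hx0
      rw [haux b x hx, haux c x hx] at hx0
      simpa using hx0
    have hbm₀ : b.coeff m₀ = a.coeff m₀ := Finsupp.filter_apply_pos P a.coeff ⟨dv_refl m₀, dv_refl m₀⟩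
    have hbm₀ne : m₀ ∈ b.coeff.support := by
      rw [Finsupp.mem_support_iff, hbm₀]
      exact Finsupp.mem_support_iff.mp hm₀T
    obtain ⟨m, hmT, hdiag⟩ := diag_P P b.coeff.support (fun x hx => (hbsupp x hx).2) ⟨m₀, hbm₀ne⟩
    have hPm : P m := (hbsupp m hmT).2
    have hP2m : P (m + m) := PClass.padd hPm hPm
    have hU : UniqueAdd b.coeff.support b.coeff.support m m := by
      intro u v hu hv huv
      exact hdiag u hu v hv huv
    have hcoeff := AddMonoidAlgebra.coeff_mul_add_of_uniqueAdd (f := b) (g := b) hU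
    rw [hbb _ hP2m] at hcoeff
    have : b.coeff m = 0 := by
      have hnil : IsNilpotent (b.coeff m) := ⟨2, by rw [pow_two]; exact hcoeff.symm⟩
      exact hnil.eq_zero
    exact Finsupp.mem_support_iff.mp hmT this
  constructor
  rintro x ⟨n, hn⟩
  have main : ∀ n : ℕ, ∀ x : AddMonoidAlgebra R M, x ^ n = 0 → x = 0 := by
    intro n
    induction n using Nat.strong_induction_on with
    | _ n ih =>
      intro x hx
      match n with
      | 0 =>
        rw [pow_zero] at hx
        calc x = x * 1 := (mul_one x).symm
          _ = x * 0 := by rw [hx]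
          _ = 0 := mul_zero x
      | 1 => rwa [pow_one] at hx
      | (k + 2) =>
        have h2 : x ^ (k + 1) * x ^ (k + 1) = 0 := by
          rw [← pow_add]
          have : k + 1 + (k + 1) = (k + 2) + k := by omega
          rw [this, pow_add, hx, zero_mul]
        exact ih (k + 1) (by omega) x (key _ h2)
  exact main n x hn
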